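/- arXiv:2402.16926 — 2 statements merged into one kernel-verified Lean document; each statement's English description precedes it below -/
import Mathlib

section
/- Let X be finite, γ ∈ (0,1], β ∈ [0,1), N ∈ ℕ, and let P = {(P₀, P_b) : TV(P₀, P_b) ≥ 1-β}. If α > 2|X| · exp(-2Nγ²(1-β)² / |X|²), then the detector g(D, P₀) = 1{TV(P₀, S_N) ≥ γ(1-β)/2}, where S_N is the empirical distribution of D, satisfies: for every (P₀, P_b) ∈ P, ½ Pr_{D~P₁^N}{g(D,P₀)=0} + ½ Pr_{D~P₀^N}{g(D,P₀)=1} ≤ α, where P₁ = γP_b + (1-γ)P₀. -/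
open MeasureTheory

/-- Empirical distribution (type) of a dataset of N samples. -/
noncomputable def empDist {X : Type*} [Fintype X] [DecidableEq X] {N : ℕ}
    (D : Fin N → X) (x : X) : ℝ :=
  (Finset.univ.filter fun n => D n = x).card / N

/-- Total variation distance between two probability vectors on a finite alphabet. -/
noncomputable def tvFin {X : Type*} [Fintype X] (f g : X → ℝ) : ℝ :=
  (∑ x, |f x - g x|) / 2

/-- Total variation distance between two PMFs on a finite alphabet. -/
noncomputable def tvPMF {X : Type*} [Fintype X] (P Q : PMF X) : ℝ :=
  tvFin (fun x => (P x).toReal) (fun x => (Q x).toReal)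


private lemma amgm4 (a b : ℝ) : a * b ≤ 1 / 4 * (a + b) ^ 2 := by
  nlinarith [sq_nonneg (a - b)]

theorem hoeffding_lemma (p : ℝ) (hp0 : 0 ≤ p) (hp1 : p ≤ 1) (l : ℝ) (hl : 0 ≤ l) :
    p * Real.exp ((1 - p) * l) + (1 - p) * Real.exp (-(p * l)) ≤ Real.exp (l ^ 2 / 8) := by
  set q : ℝ := 1 - p with hq
  have hq0 : 0 ≤ q := by simp [hq]; linarith
  set G : ℝ → ℝ := fun x => p * Real.exp (q * x) + q * Real.exp (-(p * x)) with hGdef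
  have hGpos : ∀ x, 0 < G x := by
    intro x
    rcases eq_or_lt_of_le hp0 with h | h
    · have : q = 1 := by simp [hq, ← h]
      simp only [hGdef, ← h, this]
      positivity
    · have h1 : 0 < p * Real.exp (q * x) := by positivity
      have h2 : 0 ≤ q * Real.exp (-(p * x)) := by positivity
      simp only [hGdef]; linarith
  set D1 : ℝ → ℝ := fun x => p * q * Real.exp (q * x) - q * p * Real.exp (-(p * x)) with hD1def
  have hG : ∀ x, HasDerivAt G (D1 x) x := by
    intro x
    have h1 : HasDerivAt (fun x : ℝ => Real.exp (q * x)) (Real.exp (q * x) * q) x :=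
      ((hasDerivAt_id x).const_mul q).exp.congr_deriv (by simp only [id_eq]; ring)
    have h2 : HasDerivAt (fun x : ℝ => Real.exp (-(p * x))) (Real.exp (-(p * x)) * (-p)) x :=
      (((hasDerivAt_id x).const_mul p).neg).exp.congr_deriv (by simp only [id_eq, Pi.neg_apply]; ring)
    have := (h1.const_mul p).add (h2.const_mul q)
    refine this.congr_deriv ?_
    simp only [D1]; ring
  set F : ℝ → ℝ := fun x => x ^ 2 / 8 - Real.log (G x) with hFdef
  set F1 : ℝ → ℝ := fun x => x / 4 - D1 x / G x with hF1def
  have hF : ∀ x, HasDerivAt F (F1 x) x := by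
    intro x
    have h1 : HasDerivAt (fun x : ℝ => x ^ 2 / 8) (x / 4) x :=
      ((hasDerivAt_pow 2 x).div_const 8).congr_deriv (by ring)
    have h2 : HasDerivAt (fun x => Real.log (G x)) (D1 x / G x) x :=
      (hG x).log (hGpos x).ne'
    exact h1.sub h2
  set F2 : ℝ → ℝ := fun x =>
    1 / 4 - (p * Real.exp (q * x)) * (q * Real.exp (-(p * x))) / (G x) ^ 2 with hF2def
  have hF1 : ∀ x, HasDerivAt F1 (F2 x) x := by
    intro x
    have hD1' : HasDerivAt D1 (p * q * (q * Real.exp (q * x)) - q * p * (Real.exp (-(p * x)) * (-p))) x := by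
      have h1 : HasDerivAt (fun x : ℝ => Real.exp (q * x)) (Real.exp (q * x) * q) x :=
        ((hasDerivAt_id x).const_mul q).exp.congr_deriv (by simp only [id_eq]; ring)
      have h2 : HasDerivAt (fun x : ℝ => Real.exp (-(p * x))) (Real.exp (-(p * x)) * (-p)) x :=
        (((hasDerivAt_id x).const_mul p).neg).exp.congr_deriv (by simp only [id_eq, Pi.neg_apply]; ring)
      exact ((h1.const_mul (p * q)).sub (h2.const_mul (q * p))).congr_deriv (by ring)
    have hquot := hD1'.div (hG x) (hGpos x).ne'
    have h1 : HasDerivAt (fun x : ℝ => x / 4) (1 / 4) x :=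
      ((hasDerivAt_id x).div_const 4).congr_deriv (by ring)
    have := h1.sub hquot
    refine this.congr_deriv ?_
    symm
    have hGne : G x ≠ 0 := (hGpos x).ne'
    simp only [F2, G, D1]
    field_simp
    simp only [q]
    ring_nf
  have hF2nn : ∀ x, 0 ≤ F2 x := by
    intro x
    have hA : 0 ≤ p * Real.exp (q * x) := by positivity
    have hB : 0 ≤ q * Real.exp (-(p * x)) := by positivity
    have hG2 : 0 < (G x) ^ 2 := pow_pos (hGpos x) 2
    have hle : (p * Real.exp (q * x)) * (q * Real.exp (-(p * x))) / (G x) ^ 2 ≤ 1 / 4 := by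
      rw [div_le_iff₀ hG2]
      have hGx : G x = p * Real.exp (q * x) + q * Real.exp (-(p * x)) := rfl
      rw [hGx]
      exact amgm4 _ _
    simp only [hF2def]; linarith
  have hF1mono : Monotone F1 :=
    monotone_of_deriv_nonneg (fun x => (hF1 x).differentiableAt)
      (fun x => by rw [(hF1 x).deriv]; exact hF2nn x)
  have hD10 : D1 0 = 0 := by
    simp only [hD1def, mul_zero, neg_zero, Real.exp_zero, mul_one]; ring
  have hF10 : F1 0 = 0 := by
    simp only [hF1def, hD10]
    norm_num
  have hF1nn : ∀ x ∈ Set.Ioi (0:ℝ), 0 ≤ deriv F x := by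
    intro x hx
    rw [(hF x).deriv]
    have := hF1mono (le_of_lt hx)
    rw [hF10] at this
    exact this
  have hFmono : MonotoneOn F (Set.Ici 0) := by
    apply monotoneOn_of_deriv_nonneg (convex_Ici 0)
      (Continuous.continuousOn (by
        have : ∀ x, DifferentiableAt ℝ F x := fun x => (hF x).differentiableAt
        exact (Differentiable.continuous this)))
      (fun x _ => ((hF x).differentiableAt).differentiableWithinAt)
    intro x hx
    rw [interior_Ici] at hx
    exact hF1nn x hx
  have hF0 : F 0 = 0 := by
    have : G 0 = 1 := by simp only [hGdef]; norm_num [hq]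
    simp only [hFdef, this]
    norm_num
  have hFl : 0 ≤ F l := by
    have := hFmono (Set.self_mem_Ici) (Set.mem_Ici.mpr hl) hl
    rw [hF0] at this; exact this
  have hlog : Real.log (G l) ≤ l ^ 2 / 8 := by
    simp only [hFdef] at hFl; linarith
  have := (Real.log_le_iff_le_exp (hGpos l)).mp hlog
  simpa [hGdef] using this



theorem tail_le {X : Type*} [Fintype X] (N : ℕ) (r : X → ℝ) (hr0 : ∀ y, 0 ≤ r y)
    (hr1 : ∑ y, r y = 1) (ι : X → Prop) [DecidablePred ι] (s : ℝ) (hs : 0 ≤ s) :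
    ∑ D ∈ Finset.univ.filter (fun D : Fin N → X =>
        (N : ℝ) * ((∑ y ∈ Finset.univ.filter ι, r y) + s)
          ≤ (Finset.univ.filter fun n => ι (D n)).card),
      ∏ n, r (D n) ≤ Real.exp (-(2 * N * s ^ 2)) := by
  classical
  set p : ℝ := ∑ y ∈ Finset.univ.filter ι, r y with hpdef
  have hp0 : 0 ≤ p := Finset.sum_nonneg fun y _ => hr0 y
  have hp1 : p ≤ 1 := by
    rw [← hr1]
    exact Finset.sum_le_sum_of_subset_of_nonneg (Finset.filter_subset _ _)
      (fun y _ _ => hr0 y)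
  set l : ℝ := 4 * s with hldef
  have hl : 0 ≤ l := by positivity
  set c : (Fin N → X) → ℕ := fun D => (Finset.univ.filter fun n => ι (D n)).card with hcdef
  have hprod_nn : ∀ D : Fin N → X, 0 ≤ ∏ n, r (D n) :=
    fun D => Finset.prod_nonneg fun n _ => hr0 (D n)
  -- step 1 : insert exponential
  have step1 : ∑ D ∈ Finset.univ.filter (fun D : Fin N → X => (N : ℝ) * (p + s) ≤ c D),
        ∏ n, r (D n)
      ≤ ∑ D : Fin N → X, Real.exp (l * ((c D : ℝ) - N * (p + s))) * ∏ n, r (D n) := by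
    refine le_trans (Finset.sum_le_sum ?_) (Finset.sum_le_sum_of_subset_of_nonneg
      (Finset.filter_subset _ _) (fun D _ _ => mul_nonneg (Real.exp_pos _).le (hprod_nn D)))
    intro D hD
    rw [Finset.mem_filter] at hD
    have harg : 0 ≤ l * ((c D : ℝ) - N * (p + s)) := by
      have := hD.2
      have h2 : (0:ℝ) ≤ (c D : ℝ) - N * (p + s) := by linarith
      positivity
    nlinarith [Real.exp_le_exp.mpr harg, Real.exp_zero, hprod_nn D,
      Real.one_le_exp harg]
  -- step 2 : rewrite each term
  have step2 : ∀ D : Fin N → X,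
      Real.exp (l * ((c D : ℝ) - N * (p + s))) * ∏ n, r (D n)
        = Real.exp (-(l * N * (p + s))) *
          ∏ n, (r (D n) * Real.exp (l * (if ι (D n) then (1:ℝ) else 0))) := by
    intro D
    have hcD : (c D : ℝ) = ∑ n, (if ι (D n) then (1:ℝ) else 0) := by
      simp only [hcdef, Finset.card_filter]
      push_cast
      rfl
    rw [Finset.prod_mul_distrib]
    rw [← Real.exp_sum]
    rw [mul_sub, Real.exp_sub]
    rw [hcD, Finset.mul_sum]
    rw [div_eq_mul_inv, ← Real.exp_neg]
    have harg : -(l * (↑N * (p + s))) = -(l * ↑N * (p + s)) := by ring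
    rw [harg]
    ring
  -- step 3 : product structure
  set f : X → ℝ := fun y => r y * Real.exp (l * (if ι y then (1:ℝ) else 0)) with hfdef
  have step3 : ∑ D : Fin N → X, ∏ n, f (D n) = (∑ y, f y) ^ N := by
    calc ∑ D : Fin N → X, ∏ n, f (D n) = ∏ _n : Fin N, ∑ y, f y := by
          rw [← Fintype.piFinset_univ, ← Finset.prod_univ_sum]
      _ = (∑ y, f y) ^ N := by rw [Finset.prod_const]; simp
  -- step 4 : inner sum
  have step4 : ∑ y, f y = p * Real.exp l + (1 - p) := by
    rw [← Finset.sum_filter_add_sum_filter_not Finset.univ ι]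
    have h1 : ∑ y ∈ Finset.univ.filter ι, f y = p * Real.exp l := by
      rw [hpdef, Finset.sum_mul]
      apply Finset.sum_congr rfl
      intro y hy
      rw [Finset.mem_filter] at hy
      simp [hfdef, hy.2]
    have h2 : ∑ y ∈ Finset.univ.filter (fun y => ¬ ι y), f y = 1 - p := by
      have : ∑ y ∈ Finset.univ.filter (fun y => ¬ ι y), f y
          = ∑ y ∈ Finset.univ.filter (fun y => ¬ ι y), r y := by
        apply Finset.sum_congr rfl
        intro y hy
        rw [Finset.mem_filter] at hy
        simp [hfdef, hy.2]
      rw [this]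
      have := Finset.sum_filter_add_sum_filter_not Finset.univ ι r
      rw [← hpdef] at this  -- may fail; fix below
      linarith [this, hr1]
    rw [h1, h2]
  -- step 5 : final bound
  have hfac_nn : 0 ≤ Real.exp (-(l * (p + s))) * (p * Real.exp l + (1 - p)) := by
    have : 0 ≤ p * Real.exp l + (1 - p) := by nlinarith [Real.exp_pos l]
    positivity
  have step5 : Real.exp (-(l * ↑N * (p + s))) * (p * Real.exp l + (1 - p)) ^ N
      ≤ Real.exp (-(2 * N * s ^ 2)) := by
    have hsplit : Real.exp (-(l * ↑N * (p + s))) = (Real.exp (-(l * (p + s)))) ^ N := by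
      rw [← Real.exp_nat_mul]
      congr 1
      ring
    rw [hsplit, ← mul_pow]
    have hfac : Real.exp (-(l * (p + s))) * (p * Real.exp l + (1 - p))
        ≤ Real.exp (-(2 * s ^ 2)) := by
      have hid : Real.exp (-(l * (p + s))) * (p * Real.exp l + (1 - p))
          = Real.exp (-(l * s)) * (p * Real.exp ((1 - p) * l) + (1 - p) * Real.exp (-(p * l))) := by
        have e1 : Real.exp (-(l * (p + s))) * Real.exp l
            = Real.exp (-(l * s)) * Real.exp ((1 - p) * l) := by
          rw [← Real.exp_add, ← Real.exp_add]; congr 1; ring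
        have e2 : Real.exp (-(l * (p + s)))
            = Real.exp (-(l * s)) * Real.exp (-(p * l)) := by
          rw [← Real.exp_add]; congr 1; ring
        calc Real.exp (-(l * (p + s))) * (p * Real.exp l + (1 - p))
            = p * (Real.exp (-(l * (p + s))) * Real.exp l)
              + (1 - p) * Real.exp (-(l * (p + s))) := by ring
          _ = p * (Real.exp (-(l * s)) * Real.exp ((1 - p) * l))
              + (1 - p) * (Real.exp (-(l * s)) * Real.exp (-(p * l))) := by rw [e1, e2]
          _ = Real.exp (-(l * s)) * (p * Real.exp ((1 - p) * l) + (1 - p) * Real.exp (-(p * l))) := by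
              ring
      rw [hid]
      have hkey := hoeffding_lemma p hp0 hp1 l hl
      calc Real.exp (-(l * s)) * (p * Real.exp ((1 - p) * l) + (1 - p) * Real.exp (-(p * l)))
          ≤ Real.exp (-(l * s)) * Real.exp (l ^ 2 / 8) :=
            mul_le_mul_of_nonneg_left hkey (Real.exp_pos _).le
        _ = Real.exp (-(2 * s ^ 2)) := by
            rw [← Real.exp_add]; congr 1; rw [hldef]; ring
    calc (Real.exp (-(l * (p + s))) * (p * Real.exp l + (1 - p))) ^ N
        ≤ (Real.exp (-(2 * s ^ 2))) ^ N := pow_le_pow_left₀ hfac_nn hfac N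
      _ = Real.exp (-(2 * N * s ^ 2)) := by
          rw [← Real.exp_nat_mul]; congr 1; ring
  calc ∑ D ∈ Finset.univ.filter (fun D : Fin N → X => (N : ℝ) * (p + s) ≤ c D), ∏ n, r (D n)
      ≤ ∑ D : Fin N → X, Real.exp (l * ((c D : ℝ) - N * (p + s))) * ∏ n, r (D n) := step1
    _ = Real.exp (-(l * ↑N * (p + s))) * ∑ D : Fin N → X, ∏ n, f (D n) := by
        rw [Finset.mul_sum]
        exact Finset.sum_congr rfl fun D _ => step2 D
    _ = Real.exp (-(l * ↑N * (p + s))) * (p * Real.exp l + (1 - p)) ^ N := by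
        rw [step3, step4]
    _ ≤ Real.exp (-(2 * N * s ^ 2)) := step5





theorem coord_tail {X : Type*} [Fintype X] [DecidableEq X] (N : ℕ) (hN : 0 < N)
    (r : X → ℝ) (hr0 : ∀ y, 0 ≤ r y) (hr1 : ∑ y, r y = 1) (x : X) (s : ℝ) (hs : 0 ≤ s) :
    ∑ D ∈ Finset.univ.filter (fun D : Fin N → X => s ≤ |empDist D x - r x|),
      ∏ n, r (D n) ≤ 2 * Real.exp (-(2 * N * s ^ 2)) := by
  classical
  have hprod_nn : ∀ D : Fin N → X, 0 ≤ ∏ n, r (D n) :=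
    fun D => Finset.prod_nonneg fun n _ => hr0 (D n)
  have hNpos : (0:ℝ) < N := by exact_mod_cast hN
  set p : ℝ := r x with hpdef
  -- the up event matches tail_le with ι = (· = x)
  have hsum_eq : ∑ y ∈ Finset.univ.filter (fun y => y = x), r y = p := by
    rw [Finset.filter_eq']
    simp [hpdef]
  have hsum_ne : ∑ y ∈ Finset.univ.filter (fun y => ¬ y = x), r y = 1 - p := by
    have := Finset.sum_filter_add_sum_filter_not Finset.univ (fun y => y = x) r
    rw [hsum_eq, hr1] at this
    linarith
  set A : Finset (Fin N → X) := Finset.univ.filter (fun D : Fin N → X =>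
      (N : ℝ) * ((∑ y ∈ Finset.univ.filter (fun y => y = x), r y) + s)
        ≤ (Finset.univ.filter fun n => D n = x).card) with hA
  set B : Finset (Fin N → X) := Finset.univ.filter (fun D : Fin N → X =>
      (N : ℝ) * ((∑ y ∈ Finset.univ.filter (fun y => ¬ y = x), r y) + s)
        ≤ (Finset.univ.filter fun n => ¬ D n = x).card) with hB
  have hsub : Finset.univ.filter (fun D : Fin N → X => s ≤ |empDist D x - r x|) ⊆ A ∪ B := by
    intro D hD
    rw [Finset.mem_filter] at hD
    have habs := hD.2
    set c : ℕ := (Finset.univ.filter fun n => D n = x).card with hc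
    have hcle : c ≤ N := by
      rw [hc]; exact le_trans (Finset.card_filter_le _ _) (by simp)
    have hcsplit : ((Finset.univ.filter fun n => ¬ D n = x).card : ℝ) = N - c := by
      have := Finset.card_filter_add_card_filter_not
        (s := (Finset.univ : Finset (Fin N))) (p := fun n => D n = x)
      have h2 : c + (Finset.univ.filter fun n => ¬ D n = x).card = N := by
        simpa using this
      push_cast [← h2]
      ring
    rcases le_abs.mp habs with h | h
    · -- up
      apply Finset.mem_union_left
      rw [hA, Finset.mem_filter]
      refine ⟨Finset.mem_univ _, ?_⟩
      rw [hsum_eq]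
      have : empDist D x = c / N := rfl
      rw [this] at h
      rw [div_sub' hNpos.ne'] at h
      have := (le_div_iff₀ hNpos).mp h
      linarith [this]
    · -- down
      apply Finset.mem_union_right
      rw [hB, Finset.mem_filter]
      refine ⟨Finset.mem_univ _, ?_⟩
      rw [hsum_ne, hcsplit]
      have : empDist D x = c / N := rfl
      rw [this] at h
      have h2 : p - c / N ≥ s := by linarith [h]
      have h3 : p * N - c ≥ s * N := by
        calc s * N ≤ (p - c / N) * N := mul_le_mul_of_nonneg_right h2 (le_of_lt hNpos)
          _ = p * N - c := by field_simp
      nlinarith [h3]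
  calc ∑ D ∈ Finset.univ.filter (fun D : Fin N → X => s ≤ |empDist D x - r x|), ∏ n, r (D n)
      ≤ ∑ D ∈ A ∪ B, ∏ n, r (D n) :=
        Finset.sum_le_sum_of_subset_of_nonneg hsub (fun D _ _ => hprod_nn D)
    _ ≤ (∑ D ∈ A, ∏ n, r (D n)) + ∑ D ∈ B, ∏ n, r (D n) := by
        have := Finset.sum_union_inter (s₁ := A) (s₂ := B) (f := fun D : Fin N → X => ∏ n, r (D n))
        have hnn : 0 ≤ ∑ D ∈ A ∩ B, ∏ n, r (D n) :=
          Finset.sum_nonneg fun D _ => hprod_nn D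
        linarith
    _ ≤ Real.exp (-(2 * N * s ^ 2)) + Real.exp (-(2 * N * s ^ 2)) := by
        gcongr
        · exact tail_le N r hr0 hr1 (fun y => y = x) s hs
        · exact tail_le N r hr0 hr1 (fun y => ¬ y = x) s hs
    _ = 2 * Real.exp (-(2 * N * s ^ 2)) := by ring





lemma sum_filter_exists_le {D β : Type*} [Fintype D] [Fintype β] (w : D → ℝ)
    (hw : ∀ d, 0 ≤ w d) (Q : β → D → Prop) [∀ b, DecidablePred (Q b)]
    [DecidablePred fun d => ∃ b, Q b d] :
    ∑ d ∈ Finset.univ.filter (fun d => ∃ b, Q b d), w d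
      ≤ ∑ b : β, ∑ d ∈ Finset.univ.filter (Q b), w d := by
  classical
  calc ∑ d ∈ Finset.univ.filter (fun d => ∃ b, Q b d), w d
      ≤ ∑ d ∈ Finset.univ.filter (fun d => ∃ b, Q b d),
          ∑ b : β, (if Q b d then w d else 0) := by
        apply Finset.sum_le_sum
        intro d hd
        rw [Finset.mem_filter] at hd
        obtain ⟨b, hb⟩ := hd.2
        refine le_trans (le_of_eq (show w d = if Q b d then w d else 0 from (if_pos hb).symm)) ?_
        exact Finset.single_le_sum (f := fun b => if Q b d then w d else 0)
          (fun b _ => by split; exacts [hw d, le_rfl]) (Finset.mem_univ b)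
    _ ≤ ∑ d : D, ∑ b : β, (if Q b d then w d else 0) :=
        Finset.sum_le_sum_of_subset_of_nonneg (Finset.filter_subset _ _)
          (fun d _ _ => Finset.sum_nonneg fun b _ => by split; exacts [hw d, le_rfl])
    _ = ∑ b : β, ∑ d : D, (if Q b d then w d else 0) := Finset.sum_comm
    _ = ∑ b : β, ∑ d ∈ Finset.univ.filter (Q b), w d := by
        apply Finset.sum_congr rfl
        intro b _
        rw [Finset.sum_filter]

theorem tv_tail {X : Type*} [Fintype X] [DecidableEq X] (N : ℕ) (hN : 0 < N)
    (r : X → ℝ) (hr0 : ∀ y, 0 ≤ r y) (hr1 : ∑ y, r y = 1) (t : ℝ) (ht : 0 ≤ t) :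
    ∑ D ∈ Finset.univ.filter (fun D : Fin N → X => t ≤ tvFin r (empDist D)),
      ∏ n, r (D n)
      ≤ 2 * (Fintype.card X) * Real.exp (-(8 * N * t ^ 2) / (Fintype.card X : ℝ) ^ 2) := by
  classical
  have hXne : Nonempty X := by
    by_contra h
    rw [not_nonempty_iff] at h
    rw [Finset.univ_eq_empty, Finset.sum_empty] at hr1
    norm_num at hr1
  have hK : 0 < Fintype.card X := Fintype.card_pos_iff.mpr hXne
  set K : ℝ := (Fintype.card X : ℝ) with hKdef
  have hKpos : (0:ℝ) < K := by rw [hKdef]; exact_mod_cast hK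
  set s : ℝ := 2 * t / K with hsdef
  have hs : 0 ≤ s := by positivity
  have hprod_nn : ∀ D : Fin N → X, 0 ≤ ∏ n, r (D n) :=
    fun D => Finset.prod_nonneg fun n _ => hr0 (D n)
  have hsub : Finset.univ.filter (fun D : Fin N → X => t ≤ tvFin r (empDist D))
      ⊆ Finset.univ.filter (fun D : Fin N → X => ∃ x, s ≤ |empDist D x - r x|) := by
    intro D hD
    rw [Finset.mem_filter] at hD ⊢
    refine ⟨Finset.mem_univ _, ?_⟩
    by_contra h
    push_neg at h
    have hlt : ∑ x, |r x - empDist D x| < ∑ _x : X, s := by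
      apply Finset.sum_lt_sum_of_nonempty Finset.univ_nonempty
      intro x _
      rw [abs_sub_comm]
      exact h x
    rw [Finset.sum_const, Finset.card_univ, nsmul_eq_mul] at hlt
    have : (Fintype.card X : ℝ) * s = 2 * t := by
      rw [hsdef]; field_simp; rw [hKdef]; ring
    rw [this] at hlt
    have htv := hD.2
    unfold tvFin at htv
    linarith
  calc ∑ D ∈ Finset.univ.filter (fun D : Fin N → X => t ≤ tvFin r (empDist D)), ∏ n, r (D n)
      ≤ ∑ D ∈ Finset.univ.filter (fun D : Fin N → X => ∃ x, s ≤ |empDist D x - r x|),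
          ∏ n, r (D n) :=
        Finset.sum_le_sum_of_subset_of_nonneg hsub (fun D _ _ => hprod_nn D)
    _ ≤ ∑ x : X, ∑ D ∈ Finset.univ.filter (fun D : Fin N → X => s ≤ |empDist D x - r x|),
          ∏ n, r (D n) :=
        sum_filter_exists_le _ hprod_nn _
    _ ≤ ∑ _x : X, 2 * Real.exp (-(2 * N * s ^ 2)) :=
        Finset.sum_le_sum fun x _ => coord_tail N hN r hr0 hr1 x s hs
    _ = 2 * (Fintype.card X) * Real.exp (-(8 * N * t ^ 2) / K ^ 2) := by
        rw [Finset.sum_const, Finset.card_univ, nsmul_eq_mul]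
        have : -(2 * (N:ℝ) * s ^ 2) = -(8 * N * t ^ 2) / K ^ 2 := by
          rw [hsdef]
          field_simp
          ring
        rw [this]
        ring



theorem measure_le_sum {X : Type*} [Fintype X] [DecidableEq X] [MeasurableSpace X]
    [MeasurableSingletonClass X] {N : ℕ} (P : PMF X) (S : Set (Fin N → X)) [DecidablePred fun D : Fin N → X => D ∈ S] :
    ((Measure.pi fun _ : Fin N => P.toMeasure) S).toReal
      ≤ ∑ D ∈ Finset.univ.filter (fun D : Fin N → X => D ∈ S), ∏ n, (P (D n)).toReal := by
  classical
  set μ := Measure.pi fun _ : Fin N => P.toMeasure with hμ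
  have hsingle : ∀ D : Fin N → X, μ {D} = ∏ n, P (D n) := by
    intro D
    have h1 : ({D} : Set (Fin N → X)) = Set.pi Set.univ (fun n => {D n}) := by
      rw [Set.univ_pi_singleton]
    rw [h1, hμ, Measure.pi_pi]
    apply Finset.prod_congr rfl
    intro n _
    exact PMF.toMeasure_apply_singleton P (D n) (measurableSet_singleton _)
  have hsub : S ⊆ ⋃ D ∈ Finset.univ.filter (fun D : Fin N → X => D ∈ S), ({D} : Set (Fin N → X)) := by
    intro D hD
    simp only [Set.mem_iUnion]
    exact ⟨D, by simp [hD], rfl⟩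
  have hb : μ S ≤ ∑ D ∈ Finset.univ.filter (fun D : Fin N → X => D ∈ S), μ {D} :=
    le_trans (measure_mono hsub) (measure_biUnion_finset_le _ _)
  have hfin : ∀ D : Fin N → X, ∏ n, P (D n) ≠ ⊤ :=
    fun D => ENNReal.prod_ne_top fun n _ => PMF.apply_ne_top P (D n)
  have hsum_ne : (∑ D ∈ Finset.univ.filter (fun D : Fin N → X => D ∈ S), μ {D}) ≠ ⊤ := by
    rw [← lt_top_iff_ne_top]
    apply ENNReal.sum_lt_top.mpr
    intro D _
    rw [hsingle D, lt_top_iff_ne_top]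
    exact hfin D
  calc (μ S).toReal ≤ (∑ D ∈ Finset.univ.filter (fun D : Fin N → X => D ∈ S), μ {D}).toReal :=
        ENNReal.toReal_mono hsum_ne hb
    _ = ∑ D ∈ Finset.univ.filter (fun D : Fin N → X => D ∈ S), ∏ n, (P (D n)).toReal := by
        rw [ENNReal.toReal_sum (fun D _ => by rw [hsingle D]; exact hfin D)]
        apply Finset.sum_congr rfl
        intro D _
        rw [hsingle D, ENNReal.toReal_prod]

lemma pmf_sum_toReal {X : Type*} [Fintype X] (P : PMF X) : ∑ x, (P x).toReal = 1 := by
  have h := P.tsum_coe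
  rw [tsum_fintype] at h
  have h2 := congrArg ENNReal.toReal h
  rw [ENNReal.toReal_sum (fun x _ => PMF.apply_ne_top P x)] at h2
  simpa using h2

lemma pmf_measure_bound {X : Type*} [Fintype X] [DecidableEq X] [MeasurableSpace X]
    [MeasurableSingletonClass X] {N : ℕ} (hN : 0 < N) (P : PMF X) (t : ℝ) (ht : 0 ≤ t) :
    ((Measure.pi fun _ : Fin N => P.toMeasure)
        {D | t ≤ tvFin (fun x => (P x).toReal) (empDist D)}).toReal
      ≤ 2 * (Fintype.card X) * Real.exp (-(8 * N * t ^ 2) / (Fintype.card X : ℝ) ^ 2) := by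
  classical
  set r : X → ℝ := fun x => (P x).toReal with hrdef
  have hr0 : ∀ y, 0 ≤ r y := fun y => ENNReal.toReal_nonneg
  have hr1 : ∑ y, r y = 1 := pmf_sum_toReal P
  calc ((Measure.pi fun _ : Fin N => P.toMeasure)
        {D | t ≤ tvFin r (empDist D)}).toReal
      ≤ ∑ D ∈ Finset.univ.filter
          (fun D : Fin N → X => D ∈ {D | t ≤ tvFin r (empDist D)}), ∏ n, (P (D n)).toReal :=
        measure_le_sum P _
    _ = ∑ D ∈ Finset.univ.filter
          (fun D : Fin N → X => t ≤ tvFin r (empDist D)), ∏ n, r (D n) := by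
        apply Finset.sum_congr
        · apply Finset.filter_congr
          intro D _
          simp [Set.mem_setOf_eq]
        · intro D _; rfl
    _ ≤ 2 * (Fintype.card X) * Real.exp (-(8 * N * t ^ 2) / (Fintype.card X : ℝ) ^ 2) :=
        tv_tail N hN r hr0 hr1 t ht


/-- Achievability: if α > 2|X| exp(-2Nγ²(1-β)²/|X|²), the type-based detector
g(D,P₀) = 1{TV(P₀, S_N) ≥ γ(1-β)/2} is α-error over all pairs with TV(P₀,P_b) ≥ 1-β. -/
theorem stmt9 {X : Type*} [Fintype X] [DecidableEq X] [MeasurableSpace X]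
    [MeasurableSingletonClass X]
    (N : ℕ) (hN : 0 < N) (γ β α : ℝ) (hγ0 : 0 < γ) (hγ1 : γ ≤ 1) (hβ0 : 0 ≤ β) (hβ1 : β < 1)
    (hα : 2 * Fintype.card X * Real.exp (-(2 * N * γ ^ 2 * (1 - β) ^ 2) / (Fintype.card X : ℝ) ^ 2)
        < α) :
    ∀ P₀ Pb P₁ : PMF X,
      (∀ x, P₁ x = ENNReal.ofReal γ * Pb x + ENNReal.ofReal (1 - γ) * P₀ x) →
      1 - β ≤ tvPMF P₀ Pb →
      1 / 2 * ((Measure.pi fun _ : Fin N => P₁.toMeasure)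
          {D | ¬ (γ * (1 - β) / 2 ≤ tvFin (fun x => (P₀ x).toReal) (empDist D))}).toReal +
      1 / 2 * ((Measure.pi fun _ : Fin N => P₀.toMeasure)
          {D | γ * (1 - β) / 2 ≤ tvFin (fun x => (P₀ x).toReal) (empDist D)}).toReal ≤ α := by
  intro P₀ Pb P₁ hP₁ htv
  classical
  set t : ℝ := γ * (1 - β) / 2 with htdef
  have hβ' : (0:ℝ) ≤ 1 - β := by linarith
  have ht : 0 ≤ t := by rw [htdef]; positivity
  set r0 : X → ℝ := fun x => (P₀ x).toReal with hr0def
  set r1 : X → ℝ := fun x => (P₁ x).toReal with hr1def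
  set rb : X → ℝ := fun x => (Pb x).toReal with hrbdef
  set K : ℝ := (Fintype.card X : ℝ) with hKdef
  set B : ℝ := 2 * K * Real.exp (-(8 * N * t ^ 2) / K ^ 2) with hBdef
  have hBα : B < α := by
    have harg : -(8 * (N:ℝ) * t ^ 2) / K ^ 2 = -(2 * N * γ ^ 2 * (1 - β) ^ 2) / K ^ 2 := by
      rw [htdef]; ring_nf
    rw [hBdef, harg]
    exact hα
  -- bound for the P₀ term
  have h0 : ((Measure.pi fun _ : Fin N => P₀.toMeasure)
      {D | t ≤ tvFin r0 (empDist D)}).toReal ≤ B :=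
    pmf_measure_bound hN P₀ t ht
  -- relation between r1, r0, rb
  have hr1eq : ∀ x, r1 x = γ * rb x + (1 - γ) * r0 x := by
    intro x
    have h := hP₁ x
    have h2 := congrArg ENNReal.toReal h
    rw [ENNReal.toReal_add (ENNReal.mul_ne_top ENNReal.ofReal_ne_top (PMF.apply_ne_top Pb x))
      (ENNReal.mul_ne_top ENNReal.ofReal_ne_top (PMF.apply_ne_top P₀ x)),
      ENNReal.toReal_mul, ENNReal.toReal_mul,
      ENNReal.toReal_ofReal (le_of_lt hγ0), ENNReal.toReal_ofReal (by linarith : (0:ℝ) ≤ 1 - γ)]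
      at h2
    exact h2
  have htv01 : γ * (1 - β) ≤ tvFin r0 r1 := by
    have heq : tvFin r0 r1 = γ * tvFin r0 rb := by
      unfold tvFin
      have hsum : ∑ x, |r0 x - r1 x| = γ * ∑ x, |r0 x - rb x| := by
        rw [Finset.mul_sum]
        apply Finset.sum_congr rfl
        intro x _
        rw [hr1eq x]
        have hx : r0 x - (γ * rb x + (1 - γ) * r0 x) = γ * (r0 x - rb x) := by ring
        rw [hx, abs_mul, abs_of_pos hγ0]
      rw [hsum]
      ring
    rw [heq]
    have htvb : 1 - β ≤ tvFin r0 rb := htv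
    exact mul_le_mul_of_nonneg_left htvb (le_of_lt hγ0)
  -- subset relation
  have hsubset : {D : Fin N → X | ¬ (t ≤ tvFin r0 (empDist D))}
      ⊆ {D : Fin N → X | t ≤ tvFin r1 (empDist D)} := by
    intro D hD
    simp only [Set.mem_setOf_eq, not_le] at hD ⊢
    have htri : tvFin r0 r1 ≤ tvFin r0 (empDist D) + tvFin r1 (empDist D) := by
      unfold tvFin
      rw [← add_div]
      apply div_le_div_of_nonneg_right ?_ (by norm_num)
      rw [← Finset.sum_add_distrib]
      apply Finset.sum_le_sum
      intro x _
      calc |r0 x - r1 x| ≤ |r0 x - empDist D x| + |empDist D x - r1 x| := abs_sub_le _ _ _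
        _ = |r0 x - empDist D x| + |r1 x - empDist D x| := by rw [abs_sub_comm (empDist D x)]
    have h2t : 2 * t = γ * (1 - β) := by rw [htdef]; ring
    linarith
  have h1 : ((Measure.pi fun _ : Fin N => P₁.toMeasure)
      {D | ¬ (t ≤ tvFin r0 (empDist D))}).toReal ≤ B := by
    have hmono : ((Measure.pi fun _ : Fin N => P₁.toMeasure)
        {D | ¬ (t ≤ tvFin r0 (empDist D))}).toReal
        ≤ ((Measure.pi fun _ : Fin N => P₁.toMeasure)
        {D | t ≤ tvFin r1 (empDist D)}).toReal :=
      ENNReal.toReal_mono (measure_ne_top _ _) (measure_mono hsubset)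
    exact le_trans hmono (pmf_measure_bound hN P₁ t ht)
  linarith
end

section
/- If |X| = ∞, γ ∈ (0,1] and N ∈ ℕ are fixed, and P = {(P₀, P_b) : P₀ ≠ P_b}, then any α-error Type-3 detector (Neyman–Pearson optimal, with access to P₀ and P_b) must have α = ½. -/
open MeasureTheory

private lemma my_prod_mono_left {A B : Type*} [MeasurableSpace A] [MeasurableSpace B]
    {μ μ' : Measure A} {ν : Measure B} [SFinite ν] (h : μ ≤ μ') :
    μ.prod ν ≤ μ'.prod ν := by
  refine Measure.le_iff.mpr fun s hs => ?_
  rw [Measure.prod_apply hs, Measure.prod_apply hs]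
  exact lintegral_mono' h le_rfl

private lemma my_smul_prod {A B : Type*} [MeasurableSpace A] [MeasurableSpace B]
    (c : ENNReal) (μ : Measure A) (ν : Measure B) [SFinite ν] :
    (c • μ).prod ν = c • (μ.prod ν) := by
  ext s hs
  rw [Measure.smul_apply, Measure.prod_apply hs, Measure.prod_apply hs,
    lintegral_smul_measure, smul_eq_mul]

/-- Key step: for any δ ∈ (0,1], the risk bound forces `(1 - γ*δ)^N / 2 ≤ α`. -/
private lemma key_step {X Ω : Type*} [Countable X] [Infinite X]
    [MeasurableSpace X] [MeasurableSingletonClass X]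
    [MeasurableSpace Ω] (μΩ : Measure Ω) [IsProbabilityMeasure μΩ]
    (N : ℕ) (γ α : ℝ) (hγ0 : 0 < γ) (hγ1 : γ ≤ 1)
    (g : (Fin N → X) → PMF X → PMF X → Ω → Bool)
    (hdet : ∀ P₀ Pb P₁ : PMF X,
      (∀ x, P₁ x = ENNReal.ofReal γ * Pb x + ENNReal.ofReal (1 - γ) * P₀ x) →
      P₀ ≠ Pb →
      1 / 2 * (((Measure.pi fun _ : Fin N => P₁.toMeasure).prod μΩ)
          {q | g q.1 P₀ Pb q.2 = false}).toReal +
      1 / 2 * (((Measure.pi fun _ : Fin N => P₀.toMeasure).prod μΩ)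
          {q | g q.1 P₀ Pb q.2 = true}).toReal ≤ α)
    (δ : ℝ) (hδ0 : 0 < δ) (hδ1 : δ ≤ 1) :
    (1 - γ * δ) ^ N / 2 ≤ α := by
  obtain ⟨x₀, x₁, hne⟩ := exists_pair_ne X
  have hγ' : ENNReal.ofReal γ ≤ 1 := by
    rw [← ENNReal.ofReal_one]; exact ENNReal.ofReal_le_ofReal hγ1
  have hδ' : ENNReal.ofReal δ ≤ 1 := by
    rw [← ENNReal.ofReal_one]; exact ENNReal.ofReal_le_ofReal hδ1
  set γ' := ENNReal.ofReal γ with hγ'def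
  set δ' := ENNReal.ofReal δ with hδ'def
  -- the distributions
  set P₀ : PMF X := PMF.pure x₀ with hP₀
  set Pb : PMF X := (PMF.bernoulli δ.toNNReal (Real.toNNReal_le_one.mpr hδ1)).bind (fun b => if b then PMF.pure x₁ else PMF.pure x₀)
    with hPb
  set P₁ : PMF X := (PMF.bernoulli γ.toNNReal (Real.toNNReal_le_one.mpr hγ1)).bind (fun b => if b then Pb else P₀) with hP₁
  have hPbapp : ∀ x, Pb x = (1 - δ') * (PMF.pure x₀ x) + δ' * (PMF.pure x₁ x) := by
    intro x
    rw [hPb, PMF.bind_apply, tsum_bool]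
    simp [PMF.bernoulli_apply, hδ'def, ENNReal.ofReal]
  have hP₁app : ∀ x, P₁ x = γ' * Pb x + (1 - γ') * P₀ x := by
    intro x
    rw [hP₁, PMF.bind_apply, tsum_bool]
    simp [PMF.bernoulli_apply, add_comm, hγ'def, ENNReal.ofReal]
  have hmix : ∀ x, P₁ x = ENNReal.ofReal γ * Pb x + ENNReal.ofReal (1 - γ) * P₀ x := by
    intro x
    rw [hP₁app x, ENNReal.ofReal_sub _ hγ0.le, ENNReal.ofReal_one]
  have hne' : P₀ ≠ Pb := by
    intro h
    have h1 : P₀ x₁ = Pb x₁ := by rw [h]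
    rw [hPbapp x₁] at h1
    simp [hP₀, PMF.pure_apply, hne.symm, hne] at h1
    exact absurd h1.symm (ne_of_lt (ENNReal.ofReal_pos.mpr hδ0)).symm
  -- P₁ x₀ ≥ 1 - γ'δ'
  have hPbx₀ : Pb x₀ = 1 - δ' := by
    rw [hPbapp x₀]; simp [PMF.pure_apply, if_neg hne]
  have hP₁x₀ : 1 - γ' * δ' ≤ P₁ x₀ := by
    rw [hP₁app x₀, hPbx₀]
    have hP₀x₀ : P₀ x₀ = 1 := by simp [hP₀]
    rw [hP₀x₀, mul_one]
    rw [tsub_le_iff_right]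
    calc (1 : ENNReal) = γ' * ((1 - δ') + δ') + (1 - γ') := by
          rw [tsub_add_cancel_of_le hδ', mul_one, add_comm, tsub_add_cancel_of_le hγ']
      _ = γ' * (1 - δ') + (1 - γ') + γ' * δ' := by ring
      _ ≤ γ' * (1 - δ') + (1 - γ') + γ' * δ' := le_rfl
  -- the dirac point
  set p : Fin N → X := fun _ => x₀ with hp
  have hdirac : (Measure.pi fun _ : Fin N => P₀.toMeasure) = Measure.dirac p := by
    refine Measure.pi_eq fun s hs => ?_
    rw [Measure.dirac_apply' _ (MeasurableSet.univ_pi hs)]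
    have : ∀ i : Fin N, Measure.dirac x₀ (s i) = Set.indicator (s i) 1 x₀ := fun i =>
      Measure.dirac_apply' _ (hs i)
    simp only [hP₀, PMF.toMeasure_pure, this]
    by_cases h : p ∈ Set.pi Set.univ s
    · rw [Set.indicator_of_mem h]
      rw [Set.mem_univ_pi] at h
      exact (Finset.prod_eq_one fun i _ => Set.indicator_of_mem (h i) 1).symm
    · rw [Set.indicator_of_notMem h]
      rw [Set.mem_univ_pi] at h
      push_neg at h
      obtain ⟨i, hi⟩ := h
      refine (Finset.prod_eq_zero (Finset.mem_univ i) ?_).symm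
      exact Set.indicator_of_notMem hi 1
  set c : ENNReal := (1 - γ' * δ') ^ N with hc
  have hcle : c ≤ 1 := by
    rw [hc]
    exact pow_le_one' (le_trans tsub_le_self le_rfl) N
  -- μ₁ ≥ c • dirac p
  have hlow : c • (Measure.dirac p : Measure (Fin N → X)) ≤
      Measure.pi fun _ : Fin N => P₁.toMeasure := by
    refine Measure.le_iff.mpr fun s hs => ?_
    rw [Measure.smul_apply, Measure.dirac_apply' _ hs, smul_eq_mul]
    by_cases h : p ∈ s
    · rw [Set.indicator_of_mem h, Pi.one_apply, mul_one]
      calc c ≤ (Measure.pi fun _ : Fin N => P₁.toMeasure) {p} := by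
              rw [← Set.univ_pi_singleton p, Measure.pi_pi]
              have hceq : c = ∏ _i : Fin N, (1 - γ' * δ') := by
                rw [hc, Finset.prod_const, Finset.card_univ, Fintype.card_fin]
              rw [hceq]
              refine Finset.prod_le_prod' fun i _ => ?_
              rw [PMF.toMeasure_apply_singleton _ _ (measurableSet_singleton _)]
              exact hP₁x₀
        _ ≤ _ := measure_mono (Set.singleton_subset_iff.mpr h)
    · rw [Set.indicator_of_notMem h, mul_zero]
      exact zero_le
  -- apply the detector bound
  have hbound := hdet P₀ Pb P₁ hmix hne'
  set A : Set ((Fin N → X) × Ω) := {q | g q.1 P₀ Pb q.2 = true} with hA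
  have hAc : {q : (Fin N → X) × Ω | g q.1 P₀ Pb q.2 = false} = Aᶜ := by
    ext q; simp [hA]
  rw [hAc, hdirac] at hbound
  set ν : Measure ((Fin N → X) × Ω) := (Measure.dirac p).prod μΩ with hν
  have hprob : IsProbabilityMeasure ν := by infer_instance
  set a : ENNReal := ν A with ha
  have hale : a ≤ 1 := by rw [ha]; exact prob_le_one
  -- μ₀-term equals a
  -- μ₁-term lower bound
  have h1 : c * (ν Aᶜ) ≤ ((Measure.pi fun _ : Fin N => P₁.toMeasure).prod μΩ) Aᶜ := by
    calc c * (ν Aᶜ) = ((c • (Measure.dirac p : Measure (Fin N → X))).prod μΩ) Aᶜ := by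
          rw [my_smul_prod, Measure.smul_apply, smul_eq_mul]
      _ ≤ _ := Measure.le_iff'.mp (my_prod_mono_left hlow) Aᶜ
  have h2 : 1 - a ≤ ν Aᶜ := by
    rw [tsub_le_iff_right, ha]
    calc (1 : ENNReal) = ν Set.univ := (measure_univ).symm
      _ = ν (Aᶜ ∪ A) := by rw [Set.compl_union_self]
      _ ≤ ν Aᶜ + ν A := measure_union_le _ _
  have h3 : c * (1 - a) ≤ ((Measure.pi fun _ : Fin N => P₁.toMeasure).prod μΩ) Aᶜ :=
    le_trans (mul_le_mul_right h2 c) h1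
  -- convert to reals
  have hfin1 : ((Measure.pi fun _ : Fin N => P₁.toMeasure).prod μΩ) Aᶜ ≠ ⊤ :=
    (measure_lt_top _ _).ne
  have hcreal : c.toReal = (1 - γ * δ) ^ N := by
    rw [hc, ENNReal.toReal_pow]
    congr 1
    rw [hγ'def, hδ'def, ← ENNReal.ofReal_mul hγ0.le, ← ENNReal.ofReal_one,
      ← ENNReal.ofReal_sub _ (mul_nonneg hγ0.le hδ0.le), ENNReal.toReal_ofReal]
    nlinarith [mul_le_one₀ hγ1 hδ0.le hδ1]
  have hareal : a.toReal ≤ 1 := by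
    rw [← ENNReal.toReal_one]
    exact ENNReal.toReal_mono (by simp) hale
  have hareal0 : 0 ≤ a.toReal := ENNReal.toReal_nonneg
  have h4 : c.toReal * (1 - a.toReal) ≤
      (((Measure.pi fun _ : Fin N => P₁.toMeasure).prod μΩ) Aᶜ).toReal := by
    have h5 := ENNReal.toReal_mono hfin1 h3
    rw [ENNReal.toReal_mul, ENNReal.toReal_sub_of_le hale ENNReal.one_ne_top,
      ENNReal.toReal_one] at h5
    exact h5
  have hcreal1 : c.toReal ≤ 1 := by
    rw [← ENNReal.toReal_one]; exact ENNReal.toReal_mono (by simp) hcle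
  -- put it together
  have hfinal : c.toReal / 2 ≤ α := by
    calc c.toReal / 2 = c.toReal / 2 * (1 - a.toReal) + c.toReal / 2 * a.toReal := by ring
      _ ≤ 1 / 2 * (c.toReal * (1 - a.toReal)) + 1 / 2 * a.toReal := by
          have t1 : c.toReal / 2 * (1 - a.toReal) = 1 / 2 * (c.toReal * (1 - a.toReal)) := by ring
          have t2 : c.toReal / 2 * a.toReal ≤ 1 / 2 * a.toReal := by nlinarith
          linarith
      _ ≤ 1 / 2 * (((Measure.pi fun _ : Fin N => P₁.toMeasure).prod μΩ) Aᶜ).toReal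
            + 1 / 2 * a.toReal := by nlinarith
      _ ≤ α := by rw [ha, hν]; exact hbound
  rwa [hcreal] at hfinal

/-- Infinite-alphabet impossibility for Type-3 detectors: if the only restriction on the
pair of distributions is P₀ ≠ P_b, any α-error Type-3 detector (receiving the dataset,
P₀ and P_b, possibly randomized via Ω) must have α = ½. -/
theorem stmt15 {X Ω : Type*} [Countable X] [Infinite X]
    [MeasurableSpace X] [MeasurableSingletonClass X]
    [MeasurableSpace Ω] (μΩ : Measure Ω) [IsProbabilityMeasure μΩ]
    (N : ℕ) (γ α : ℝ) (hγ0 : 0 < γ) (hγ1 : γ ≤ 1) (hα : α ≤ 1 / 2)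
    (g : (Fin N → X) → PMF X → PMF X → Ω → Bool)
    (hdet : ∀ P₀ Pb P₁ : PMF X,
      (∀ x, P₁ x = ENNReal.ofReal γ * Pb x + ENNReal.ofReal (1 - γ) * P₀ x) →
      P₀ ≠ Pb →
      1 / 2 * (((Measure.pi fun _ : Fin N => P₁.toMeasure).prod μΩ)
          {q | g q.1 P₀ Pb q.2 = false}).toReal +
      1 / 2 * (((Measure.pi fun _ : Fin N => P₀.toMeasure).prod μΩ)
          {q | g q.1 P₀ Pb q.2 = true}).toReal ≤ α) :
    α = 1 / 2 := by
  have key : ∀ n : ℕ, (1 - γ * (1 / (n + 1))) ^ N / 2 ≤ α := fun n =>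
    key_step μΩ N γ α hγ0 hγ1 g hdet (1 / (n + 1)) (by positivity)
      (by rw [div_le_one (by positivity)]; linarith [Nat.cast_nonneg (α := ℝ) n])
  have hlim : Filter.Tendsto (fun n : ℕ => (1 - γ * (1 / (n + 1))) ^ N / 2)
      Filter.atTop (nhds (1 / 2)) := by
    have h0 : Filter.Tendsto (fun n : ℕ => (1 : ℝ) / (n + 1)) Filter.atTop (nhds 0) :=
      tendsto_one_div_add_atTop_nhds_zero_nat
    have : Filter.Tendsto (fun t : ℝ => (1 - γ * t) ^ N / 2) (nhds 0) (nhds (1 / 2)) := by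
      have hcont : Continuous fun t : ℝ => (1 - γ * t) ^ N / 2 := by continuity
      have := hcont.tendsto 0
      simpa using this
    exact this.comp h0
  have : (1 : ℝ) / 2 ≤ α := le_of_tendsto hlim (Filter.Eventually.of_forall key)
  linarith
end
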